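/- If ξ is an n-dimensional Gaussian vector with mean zero and covariance Σ, P is an orthogonal projection matrix of rank at most s, and λ denotes the largest eigenvalue of Σ, then the quadratic form ‖Pξ‖² is stochastically dominated by λ times a chi-squared random variable with s degrees of freedom. -/

import Mathlib

open MeasureTheory ProbabilityTheory Matrix
open scoped ENNReal NNReal BigOperators

/-- The standard Gaussian measure on `Fin n → ℝ` (iid `N(0,1)` coordinates). -/
noncomputable def stdGaussianPi (n : ℕ) : Measure (Fin n → ℝ) :=
  Measure.pi fun _ => gaussianReal 0 1

/-- The chi-squared distribution with `d` degrees of freedom, i.e. the law of the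
sum of squares of `d` independent standard Gaussians. -/
noncomputable def chiSq (d : ℕ) : Measure ℝ :=
  (stdGaussianPi d).map fun x => ∑ i, (x i) ^ 2

/-- The positive semidefinite square root (the definition Mathlib had in Dec 2024, since
removed): `U * diag(√λ) * U*` with `U` the eigenvector unitary. -/
noncomputable def Matrix.PosSemidef.sqrt {n 𝕜 : Type*} [Fintype n] [DecidableEq n] [RCLike 𝕜]
    [PartialOrder 𝕜] {A : Matrix n n 𝕜} (hA : A.PosSemidef) : Matrix n n 𝕜 :=
  hA.1.eigenvectorUnitary.1 * diagonal ((↑) ∘ (√·) ∘ hA.1.eigenvalues) *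
  (star hA.1.eigenvectorUnitary : Matrix n n 𝕜)

/-- The centered Gaussian measure on `ℝⁿ` with covariance matrix `S`, realized as the
pushforward of the standard Gaussian under multiplication by `S^{1/2}`. -/
noncomputable def gaussianVec {n : ℕ} (S : Matrix (Fin n) (Fin n) ℝ) (hS : S.PosSemidef) :
    Measure (Fin n → ℝ) :=
  (stdGaussianPi n).map fun x => hS.sqrt.mulVec x

lemma psd_sqrt_transpose {n : ℕ} {S : Matrix (Fin n) (Fin n) ℝ} (hS : S.PosSemidef) :
    hS.sqrtᵀ = hS.sqrt := by
  unfold Matrix.PosSemidef.sqrt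
  rw [Matrix.star_eq_conjTranspose, conjTranspose_eq_transpose_of_trivial,
    transpose_mul, transpose_mul, transpose_transpose, diagonal_transpose, Matrix.mul_assoc]

lemma psd_sqrt_mul_self {n : ℕ} {S : Matrix (Fin n) (Fin n) ℝ} (hS : S.PosSemidef) :
    hS.sqrt * hS.sqrt = S := by
  have hu := Unitary.coe_star_mul_self hS.1.eigenvectorUnitary
  have hD : diagonal (RCLike.ofReal ∘ (√·) ∘ hS.1.eigenvalues : Fin n → ℝ) *
      diagonal (RCLike.ofReal ∘ (√·) ∘ hS.1.eigenvalues : Fin n → ℝ)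
        = diagonal (RCLike.ofReal ∘ hS.1.eigenvalues) := by
    rw [diagonal_mul_diagonal]; congr 1; funext i
    simp [Real.mul_self_sqrt (hS.eigenvalues_nonneg i)]
  conv_rhs => rw [hS.1.spectral_theorem, Unitary.conjStarAlgAut_apply]
  unfold Matrix.PosSemidef.sqrt
  rw [← Unitary.coe_star] at *
  simp only [Matrix.mul_assoc]
  rw [← Matrix.mul_assoc _ (hS.1.eigenvectorUnitary : Matrix (Fin n) (Fin n) ℝ), hu,
    Matrix.one_mul, ← Matrix.mul_assoc (diagonal _) (diagonal _), hD]

lemma measurable_mulVec {m n : ℕ} (M : Matrix (Fin m) (Fin n) ℝ) :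
    Measurable (M.mulVec) := by
  apply measurable_pi_lambda
  intro i
  simp only [Matrix.mulVec, dotProduct]
  exact Finset.measurable_sum _ fun j _ => ((measurable_pi_apply j).const_mul _)

lemma measurable_sumsq {n : ℕ} : Measurable (fun x : Fin n → ℝ => ∑ i, (x i)^2) :=
  Finset.measurable_sum _ fun i _ => (measurable_pi_apply i).pow_const 2

instance stdGaussianPi_prob (n : ℕ) : IsProbabilityMeasure (stdGaussianPi n) := by
  unfold stdGaussianPi; infer_instance

lemma lintegral_pi_prod {α : Type*} [MeasurableSpace α] : ∀ {n : ℕ} (μ : Fin n → Measure α)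
    (_ : ∀ i, SigmaFinite (μ i)) (f : Fin n → α → ℝ≥0∞) (_ : ∀ i, Measurable (f i)),
    ∫⁻ x, ∏ i, f i (x i) ∂(Measure.pi μ) = ∏ i, ∫⁻ a, f i a ∂(μ i) := by
  intro n
  induction n with
  | zero =>
    intro μ _ f _
    simp [lintegral_const, Measure.pi_univ]
  | succ n ih =>
    intro μ hsf f hf
    have := hsf
    have hmp := measurePreserving_piFinSuccAbove μ 0
    have hm2 : Measurable fun p : α × (Fin n → α) => ∏ j, f ((0 : Fin (n+1)).succAbove j) (p.2 j) :=
      Finset.measurable_prod _ fun j _ =>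
        ((hf _).comp ((measurable_pi_apply j).comp measurable_snd))
    have hm1 : Measurable fun p : α × (Fin n → α) => f 0 p.1 :=
      (hf 0).comp measurable_fst
    calc ∫⁻ x, ∏ i, f i (x i) ∂(Measure.pi μ)
        = ∫⁻ x, (fun p : α × (Fin n → α) => f 0 p.1 * ∏ j, f ((0 : Fin (n+1)).succAbove j) (p.2 j))
            ((MeasurableEquiv.piFinSuccAbove (fun _ => α) 0) x) ∂(Measure.pi μ) := by
          refine lintegral_congr fun x => ?_
          rw [Fin.prod_univ_succAbove (fun i => f i (x i)) 0]
          rfl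
      _ = ∫⁻ p : α × (Fin n → α), f 0 p.1 * ∏ j, f ((0 : Fin (n+1)).succAbove j) (p.2 j)
            ∂((μ 0).prod (Measure.pi fun j => μ ((0 : Fin (n+1)).succAbove j))) :=
          hmp.lintegral_comp (hm1.mul hm2)
      _ = (∫⁻ a, f 0 a ∂(μ 0)) * ∫⁻ y : Fin n → α, ∏ j, f ((0 : Fin (n+1)).succAbove j) (y j)
            ∂(Measure.pi fun j => μ ((0 : Fin (n+1)).succAbove j)) :=
          lintegral_prod_mul ((hf 0).aemeasurable)
            (Finset.measurable_prod _ (fun j _ => (hf _).comp (measurable_pi_apply j))).aemeasurable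
      _ = (∫⁻ a, f 0 a ∂(μ 0)) * ∏ j, ∫⁻ a, f ((0 : Fin (n+1)).succAbove j) a
            ∂(μ ((0 : Fin (n+1)).succAbove j)) := by
          rw [ih _ (fun j => hsf _) _ (fun j => hf _)]
      _ = ∏ i, ∫⁻ a, f i a ∂(μ i) := (Fin.prod_univ_succAbove (fun i => ∫⁻ a, f i a ∂(μ i)) 0).symm

lemma stdGaussianPi_eq (n : ℕ) :
    stdGaussianPi n
      = (volume : Measure (Fin n → ℝ)).withDensity fun x => ∏ i, gaussianPDF 0 1 (x i) := by
  refine Measure.pi_eq fun s hs => ?_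
  rw [withDensity_apply _ (MeasurableSet.univ_pi hs), ← lintegral_indicator (MeasurableSet.univ_pi hs)]
  have hind : ∀ x : Fin n → ℝ,
      (Set.univ.pi s).indicator (fun x => ∏ i, gaussianPDF 0 1 (x i)) x
        = ∏ i, (s i).indicator (gaussianPDF 0 1) (x i) := by
    intro x
    by_cases hx : x ∈ Set.univ.pi s
    · rw [Set.indicator_of_mem hx]
      exact Finset.prod_congr rfl fun i _ =>
        (Set.indicator_of_mem (hx i (Set.mem_univ i)) _).symm
    · rw [Set.indicator_of_notMem hx]
      rw [Set.mem_univ_pi] at hx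
      push_neg at hx
      obtain ⟨i, hi⟩ := hx
      exact (Finset.prod_eq_zero (Finset.mem_univ i) (Set.indicator_of_notMem hi _)).symm
  simp_rw [hind]
  rw [volume_pi, lintegral_pi_prod _ (fun _ => inferInstance) _
    (fun i => (measurable_gaussianPDF 0 1).indicator (hs i))]
  refine Finset.prod_congr rfl fun i _ => ?_
  rw [lintegral_indicator (hs i), gaussianReal_of_var_ne_zero 0 one_ne_zero,
    withDensity_apply _ (hs i)]

lemma sum_sq_mulVec {m n : ℕ} (A : Matrix (Fin m) (Fin n) ℝ) (x : Fin n → ℝ) :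
    ∑ i, (A.mulVec x i)^2 = x ⬝ᵥ ((Aᵀ * A).mulVec x) := by
  have h : ∑ i, (A.mulVec x i)^2 = (A.mulVec x) ⬝ᵥ (A.mulVec x) := by
    simp [dotProduct, sq]
  rw [h, ← Matrix.mulVec_mulVec, Matrix.dotProduct_mulVec x Aᵀ, Matrix.vecMul_transpose]

lemma map_withDensity_equiv {α β : Type*} [MeasurableSpace α] [MeasurableSpace β] (e : α ≃ᵐ β)
    (μ : Measure α) (g : α → ℝ≥0∞) (hg : Measurable g) :
    (μ.withDensity g).map e = (μ.map e).withDensity (g ∘ e.symm) := by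
  ext s hs
  rw [Measure.map_apply e.measurable hs, withDensity_apply _ (e.measurable hs),
    withDensity_apply _ hs, setLIntegral_map hs (hg.comp e.symm.measurable) e.measurable]
  refine setLIntegral_congr_fun_ae (e.measurable hs) (ae_of_all _ fun x _ => ?_)
  simp

lemma prod_gaussianPDF {n : ℕ} (x : Fin n → ℝ) :
    ∏ i, gaussianPDF 0 1 (x i)
      = ENNReal.ofReal ((Real.sqrt (2 * Real.pi))⁻¹ ^ n * Real.exp (-(∑ i, (x i)^2) / 2)) := by
  simp only [gaussianPDF_def]
  rw [← ENNReal.ofReal_prod_of_nonneg (fun i _ => gaussianPDFReal_nonneg 0 1 (x i))]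
  congr 1
  simp only [gaussianPDFReal, NNReal.coe_one, mul_one, sub_zero]
  rw [Finset.prod_mul_distrib, Finset.prod_const, Finset.card_univ, Fintype.card_fin,
    ← Real.exp_sum]
  congr 1
  rw [← Finset.sum_div, Finset.sum_neg_distrib]

/-- The standard Gaussian is invariant under orthogonal transformations. -/
lemma rotation_invariant {n : ℕ} (U : Matrix (Fin n) (Fin n) ℝ) (hU : Uᵀ * U = 1) :
    (stdGaussianPi n).map U.mulVec = stdGaussianPi n := by
  have hU2 : U * Uᵀ = 1 := mul_eq_one_comm.mp hU
  have hdet2 : U.det * U.det = 1 := by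
    have := congrArg Matrix.det hU
    rwa [Matrix.det_mul, Matrix.det_transpose, Matrix.det_one] at this
  have hdet : U.det ≠ 0 := by
    intro h; rw [h, mul_zero] at hdet2; exact zero_ne_one hdet2
  have habs : |U.det| = 1 := by
    rcases mul_self_eq_one_iff.mp hdet2 with h | h <;> rw [h] <;> norm_num
  let e : (Fin n → ℝ) ≃ᵐ (Fin n → ℝ) :=
    { toFun := U.mulVec
      invFun := Uᵀ.mulVec
      left_inv := fun x => by rw [Matrix.mulVec_mulVec, hU, Matrix.one_mulVec]
      right_inv := fun x => by rw [Matrix.mulVec_mulVec, hU2, Matrix.one_mulVec]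
      measurable_toFun := measurable_mulVec U
      measurable_invFun := measurable_mulVec Uᵀ }
  have hcoe : (e : (Fin n → ℝ) → (Fin n → ℝ)) = U.mulVec := rfl
  have hg : Measurable fun x : Fin n → ℝ => ∏ i, gaussianPDF 0 1 (x i) :=
    Finset.measurable_prod _ fun i _ =>
      (measurable_gaussianPDF 0 1).comp (measurable_pi_apply i)
  have hvol : (volume : Measure (Fin n → ℝ)).map e = volume := by
    rw [hcoe]
    have h1 := Real.map_matrix_volume_pi_eq_smul_volume_pi hdet
    rw [show ⇑(Matrix.toLin' U) = U.mulVec from funext fun v => Matrix.toLin'_apply U v] at h1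
    rw [h1, abs_inv, habs]
    norm_num
  have hsymm : ((fun x : Fin n → ℝ => ∏ i, gaussianPDF 0 1 (x i)) ∘ e.symm)
      = fun x : Fin n → ℝ => ∏ i, gaussianPDF 0 1 (x i) := by
    funext y
    show ∏ i, gaussianPDF 0 1 (Uᵀ.mulVec y i) = ∏ i, gaussianPDF 0 1 (y i)
    rw [prod_gaussianPDF, prod_gaussianPDF]
    congr 2
    rw [sum_sq_mulVec, Matrix.transpose_transpose, hU2, Matrix.one_mulVec]
    simp [dotProduct, sq]
  rw [stdGaussianPi_eq, ← hcoe, map_withDensity_equiv e _ _ hg, hvol, hsymm]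

/-- Marginals of the standard Gaussian along an injection. -/
lemma marginal_stdGaussianPi {k n : ℕ} (ι : Fin k → Fin n) (hι : Function.Injective ι) :
    (stdGaussianPi n).map (fun x j => x (ι j)) = stdGaussianPi k := by
  symm
  refine Measure.pi_eq fun s hs => ?_
  have hmeas : Measurable (fun x : Fin n → ℝ => fun j => x (ι j)) :=
    measurable_pi_lambda _ fun j => measurable_pi_apply _
  rw [Measure.map_apply hmeas (MeasurableSet.univ_pi hs)]
  classical
  set t : Fin n → Set ℝ := fun i => ⋂ (j : Fin k) (_ : ι j = i), s j with ht
  have hpre : (fun x : Fin n → ℝ => fun j => x (ι j)) ⁻¹' (Set.univ.pi s) = Set.univ.pi t := by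
    ext x
    simp only [Set.mem_preimage, Set.mem_univ_pi, t, Set.mem_iInter]
    constructor
    · intro h i j hj; rw [← hj]; exact h j
    · intro h j; exact h (ι j) j rfl
  rw [hpre, stdGaussianPi, Measure.pi_pi]
  have h1 : ∀ j, t (ι j) = s j := by
    intro j
    apply Set.Subset.antisymm
    · intro x hx
      simp only [t, Set.mem_iInter] at hx
      exact hx j rfl
    · intro x hx
      simp only [t, Set.mem_iInter]
      intro j' hj'
      rwa [hι hj']
  have h2 : ∀ i, i ∉ Finset.univ.image ι → t i = Set.univ := by
    intro i hi
    simp only [Finset.mem_image, Finset.mem_univ, true_and, not_exists] at hi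
    simp only [t]
    rw [Set.iInter_eq_univ]
    intro j
    rw [Set.iInter_eq_univ]
    intro hj
    exact absurd hj (hi j)
  rw [← Finset.prod_subset (Finset.subset_univ (Finset.univ.image ι))
    (fun i _ hi => by rw [h2 i hi]; exact measure_univ),
    Finset.prod_image (fun a _ b _ h => hι h)]
  exact Finset.prod_congr rfl fun j _ => by rw [h1 j]

section Spectral

variable {n : ℕ} {M : Matrix (Fin n) (Fin n) ℝ}

lemma star_eq_transpose (V : Matrix (Fin n) (Fin n) ℝ) : star V = Vᵀ :=
  Matrix.conjTranspose_eq_transpose_of_trivial V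

lemma quadform_spectral (hM : M.IsHermitian) (x : Fin n → ℝ) :
    x ⬝ᵥ (M *ᵥ x) = ∑ i, hM.eigenvalues i *
      (((hM.eigenvectorUnitary : Matrix (Fin n) (Fin n) ℝ)ᵀ *ᵥ x) i)^2 := by
  set V : Matrix (Fin n) (Fin n) ℝ := (hM.eigenvectorUnitary : Matrix (Fin n) (Fin n) ℝ) with hV
  have hst : star V = Vᵀ := star_eq_transpose V
  conv_lhs => rw [hM.spectral_theorem, Unitary.conjStarAlgAut_apply]
  rw [show (RCLike.ofReal ∘ hM.eigenvalues : Fin n → ℝ) = hM.eigenvalues by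
      funext i; simp [RCLike.ofReal_real_eq_id]]
  rw [hst, ← Matrix.mulVec_mulVec, ← Matrix.mulVec_mulVec,
    Matrix.dotProduct_mulVec x V, ← Matrix.mulVec_transpose]
  set w := Vᵀ *ᵥ x
  simp only [dotProduct, Matrix.mulVec_diagonal]
  exact Finset.sum_congr rfl fun i _ => by ring

lemma sum_sq_transpose_unitary (hM : M.IsHermitian) (x : Fin n → ℝ) :
    ∑ i, (((hM.eigenvectorUnitary : Matrix (Fin n) (Fin n) ℝ)ᵀ *ᵥ x) i)^2 = x ⬝ᵥ x := by
  set V : Matrix (Fin n) (Fin n) ℝ := (hM.eigenvectorUnitary : Matrix (Fin n) (Fin n) ℝ) with hV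
  have h1 : V * Vᵀ = 1 := by
    rw [← star_eq_transpose V]
    exact Unitary.coe_mul_star_self hM.eigenvectorUnitary
  rw [sum_sq_mulVec, Matrix.transpose_transpose, h1, Matrix.one_mulVec]

lemma quadform_le_of_eigenvalues (hM : M.IsHermitian) {lam : ℝ}
    (hle : ∀ i, hM.eigenvalues i ≤ lam) (x : Fin n → ℝ) :
    x ⬝ᵥ (M *ᵥ x) ≤ lam * (x ⬝ᵥ x) := by
  rw [quadform_spectral hM x, ← sum_sq_transpose_unitary hM x, Finset.mul_sum]
  exact Finset.sum_le_sum fun i _ => mul_le_mul_of_nonneg_right (hle i) (sq_nonneg _)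

lemma eigenvalue_le_of_quadform (hM : M.IsHermitian) {lam : ℝ}
    (h : ∀ x, x ⬝ᵥ (M *ᵥ x) ≤ lam * (x ⬝ᵥ x)) (i : Fin n) : hM.eigenvalues i ≤ lam := by
  set v : Fin n → ℝ := ⇑(hM.eigenvectorBasis i) with hv
  have hMv : M *ᵥ v = hM.eigenvalues i • v := hM.mulVec_eigenvectorBasis i
  have hvv : v ⬝ᵥ v = 1 := by
    have h1 : (star (hM.eigenvectorUnitary : Matrix (Fin n) (Fin n) ℝ)
        * (hM.eigenvectorUnitary : Matrix (Fin n) (Fin n) ℝ)) i i = 1 := by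
      rw [Unitary.coe_star_mul_self hM.eigenvectorUnitary]
      simp
    rw [star_eq_transpose] at h1
    simp only [Matrix.mul_apply, Matrix.transpose_apply, Matrix.IsHermitian.eigenvectorUnitary_apply] at h1
    simpa [dotProduct, sq] using h1
  have h2 := h v
  rw [hMv, dotProduct_smul, smul_eq_mul, hvv, mul_one, mul_one] at h2
  exact h2

end Spectral


/-- If `ξ ~ N_n(0, Σ)`, `P` is an orthogonal projection matrix of rank at most `s`, and
`λ` is the largest eigenvalue of `Σ`, then `‖Pξ‖²` is stochastically dominated by
`λ · χ²_s`. -/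
theorem stmt_0 {Ω : Type*} [MeasureSpace Ω] [IsProbabilityMeasure (ℙ : Measure Ω)]
    {n s : ℕ} (S : Matrix (Fin n) (Fin n) ℝ) (hS : S.PosSemidef)
    (lam : ℝ) (hlam : IsGreatest (Set.range hS.1.eigenvalues) lam)
    (P : Matrix (Fin n) (Fin n) ℝ) (hPsymm : Pᵀ = P) (hPproj : P * P = P)
    (hPrank : P.rank ≤ s)
    (ξ : Ω → (Fin n → ℝ)) (hξ : Measure.map ξ ℙ = gaussianVec S hS) :
    ∀ t : ℝ, ℙ {ω | t < ∑ i, (P.mulVec (ξ ω) i) ^ 2} ≤ chiSq s {x | t < lam * x} := by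
  classical
  intro t
  have hlam0 : 0 ≤ lam := by
    obtain ⟨i, hi⟩ := hlam.1
    exact hi ▸ hS.eigenvalues_nonneg i
  have hsqrt_symm : hS.sqrtᵀ = hS.sqrt := by
    exact psd_sqrt_transpose hS
  set A := P * hS.sqrt with hAdef
  set M := Aᵀ * A with hMdef
  have hMps : M.PosSemidef := by
    have h := Matrix.posSemidef_conjTranspose_mul_self A
    rwa [Matrix.conjTranspose_eq_transpose_of_trivial] at h
  set μv := hMps.1.eigenvalues with hμv
  set V : Matrix (Fin n) (Fin n) ℝ := (hMps.1.eigenvectorUnitary : Matrix (Fin n) (Fin n) ℝ)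
    with hVdef
  -- quadratic form bound
  have hq : ∀ x : Fin n → ℝ, x ⬝ᵥ (M *ᵥ x) ≤ lam * (x ⬝ᵥ x) := by
    intro x
    have e1 : x ⬝ᵥ (M *ᵥ x) = ∑ i, ((A *ᵥ x) i)^2 := (sum_sq_mulVec A x).symm
    set w := hS.sqrt *ᵥ x with hw
    have e2 : A *ᵥ x = P *ᵥ w := by rw [hAdef, ← Matrix.mulVec_mulVec]
    have e3 : ∑ i, ((P *ᵥ w) i)^2 = w ⬝ᵥ (P *ᵥ w) := by
      rw [sum_sq_mulVec, hPsymm, hPproj]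
    have h1P : (1 - P)ᵀ * (1 - P) = 1 - P := by
      rw [Matrix.transpose_sub, Matrix.transpose_one, hPsymm, Matrix.sub_mul, Matrix.one_mul,
        Matrix.mul_sub, Matrix.mul_one, hPproj]
      abel
    have hPcontr : w ⬝ᵥ (P *ᵥ w) ≤ w ⬝ᵥ w := by
      have h0 : (0:ℝ) ≤ ∑ i, (((1 - P) *ᵥ w) i)^2 := Finset.sum_nonneg fun i _ => sq_nonneg _
      rw [sum_sq_mulVec, h1P, Matrix.sub_mulVec, Matrix.one_mulVec, dotProduct_sub] at h0
      linarith
    have e4 : w ⬝ᵥ w = x ⬝ᵥ (S *ᵥ x) := by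
      have h5 : ∑ i, ((hS.sqrt *ᵥ x) i)^2 = x ⬝ᵥ ((hS.sqrtᵀ * hS.sqrt) *ᵥ x) :=
        sum_sq_mulVec hS.sqrt x
      rw [hsqrt_symm, psd_sqrt_mul_self hS] at h5
      rw [← h5, hw]
      simp [dotProduct, sq]
    have e5 : x ⬝ᵥ (S *ᵥ x) ≤ lam * (x ⬝ᵥ x) :=
      quadform_le_of_eigenvalues hS.1 (fun i => hlam.2 ⟨i, rfl⟩) x
    calc x ⬝ᵥ (M *ᵥ x) = ∑ i, ((P *ᵥ w) i)^2 := by rw [e1, e2]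
      _ = w ⬝ᵥ (P *ᵥ w) := e3
      _ ≤ w ⬝ᵥ w := hPcontr
      _ = x ⬝ᵥ (S *ᵥ x) := e4
      _ ≤ lam * (x ⬝ᵥ x) := e5
  have heig_le : ∀ i, μv i ≤ lam := fun i => eigenvalue_le_of_quadform hMps.1 hq i
  -- the support of the eigenvalues
  set T : Finset (Fin n) := Finset.univ.filter (fun i => μv i ≠ 0) with hT
  have hTcard : T.card ≤ s := by
    have h1 : M.rank = Fintype.card {i // μv i ≠ 0} := hMps.1.rank_eq_card_non_zero_eigs
    have h2 : Fintype.card {i // μv i ≠ 0} = T.card := Fintype.card_subtype _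
    have h3 : M.rank = A.rank := Matrix.rank_transpose_mul_self A
    have h4 : A.rank ≤ P.rank := Matrix.rank_mul_le_left P hS.sqrt
    omega
  have hGle : ∀ z : Fin n → ℝ, ∑ i, μv i * (z i)^2 ≤ lam * ∑ i ∈ T, (z i)^2 := by
    intro z
    have e1 : ∑ i ∈ T, μv i * (z i)^2 = ∑ i, μv i * (z i)^2 := by
      refine Finset.sum_subset (Finset.subset_univ T) fun i _ hi => ?_
      have : μv i = 0 := by simpa [hT] using hi
      rw [this, zero_mul]
    rw [← e1, Finset.mul_sum]
    exact Finset.sum_le_sum fun i _ => mul_le_mul_of_nonneg_right (heig_le i) (sq_nonneg _)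
  have hms : ∀ {m : ℕ} (f : (Fin m → ℝ) → ℝ), Measurable f →
      MeasurableSet {x : Fin m → ℝ | t < f x} :=
    fun f hf => measurableSet_lt measurable_const hf
  set F : (Fin n → ℝ) → ℝ := fun v => ∑ i, ((P *ᵥ v) i)^2 with hF
  have hFmeas : Measurable F :=
    Finset.measurable_sum _ fun i _ =>
      ((measurable_pi_apply i).comp (measurable_mulVec P)).pow_const 2
  have hξae : AEMeasurable ξ ℙ := by
    by_contra h
    rw [Measure.map_of_not_aemeasurable h] at hξ
    have h1 : gaussianVec S hS Set.univ = 1 := by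
      rw [gaussianVec, Measure.map_apply (measurable_mulVec _) MeasurableSet.univ,
        Set.preimage_univ]
      exact measure_univ
    rw [← hξ] at h1
    simp at h1
  have hGmeas : Measurable fun z : Fin n → ℝ => ∑ i, μv i * (z i)^2 :=
    Finset.measurable_sum _ fun i _ => ((measurable_pi_apply i).pow_const 2).const_mul _
  have hVorth : Vᵀᵀ * Vᵀ = 1 := by
    rw [Matrix.transpose_transpose, ← star_eq_transpose]
    exact Unitary.coe_mul_star_self hMps.1.eigenvectorUnitary
  set k := T.card with hk
  set σ : Fin k → Fin n := fun j => ((T.orderIsoOfFin rfl) j : Fin n) with hσ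
  have hσinj : Function.Injective σ := fun a b h =>
    (T.orderIsoOfFin rfl).injective (Subtype.ext h)
  have hsumT : ∀ z : Fin n → ℝ, ∑ i ∈ T, (z i)^2 = ∑ j, (z (σ j))^2 := by
    intro z
    rw [← Finset.sum_attach T (fun i => (z i)^2)]
    exact (Equiv.sum_comp (T.orderIsoOfFin rfl).toEquiv
      (fun i : {x // x ∈ T} => (z (i : Fin n))^2)).symm
  calc ℙ {ω | t < ∑ i, (P.mulVec (ξ ω) i) ^ 2}
      = gaussianVec S hS {x | t < F x} := by
        rw [← hξ, Measure.map_apply_of_aemeasurable hξae (hms F hFmeas)]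
        rfl
    _ = stdGaussianPi n {y | t < y ⬝ᵥ (M *ᵥ y)} := by
        rw [gaussianVec, Measure.map_apply (measurable_mulVec _) (hms F hFmeas)]
        congr 1
        ext y
        simp only [Set.mem_preimage, Set.mem_setOf_eq]
        have : F (hS.sqrt *ᵥ y) = y ⬝ᵥ (M *ᵥ y) := by
          rw [hF]
          simp only []
          rw [show (fun i => ((P *ᵥ (hS.sqrt *ᵥ y)) i)^2) = fun i => ((A *ᵥ y) i)^2 by
            rw [hAdef, ← Matrix.mulVec_mulVec]]
          exact sum_sq_mulVec A y
        rw [this]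
    _ = stdGaussianPi n {z | t < ∑ i, μv i * (z i)^2} := by
        conv_rhs => rw [← rotation_invariant Vᵀ hVorth]
        rw [Measure.map_apply (measurable_mulVec _) (hms _ hGmeas)]
        congr 1
        ext y
        simp only [Set.mem_setOf_eq, Set.mem_preimage]
        rw [quadform_spectral hMps.1 y]
    _ ≤ stdGaussianPi n {z | t < lam * ∑ i ∈ T, (z i)^2} :=
        measure_mono fun z hz => lt_of_lt_of_le hz (hGle z)
    _ = stdGaussianPi k {y | t < lam * ∑ j, (y j)^2} := by
        rw [← marginal_stdGaussianPi σ hσinj,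
          Measure.map_apply (measurable_pi_lambda _ fun j => measurable_pi_apply _)
            (hms _ (measurable_sumsq.const_mul lam))]
        congr 1
        ext z
        simp only [Set.mem_setOf_eq, Set.mem_preimage]
        rw [hsumT z]
    _ ≤ stdGaussianPi s {u | t < lam * ∑ i, (u i)^2} := by
        rw [← marginal_stdGaussianPi (Fin.castLE hTcard) (Fin.castLE_injective hTcard),
          Measure.map_apply (measurable_pi_lambda _ fun j => measurable_pi_apply _)
            (hms _ (measurable_sumsq.const_mul lam))]
        apply measure_mono
        intro u hu
        simp only [Set.mem_preimage, Set.mem_setOf_eq] at hu ⊢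
        refine lt_of_lt_of_le hu (mul_le_mul_of_nonneg_left ?_ hlam0)
        rw [← Finset.sum_image (g := Fin.castLE hTcard) (f := fun i => (u i)^2)
          (fun a _ b _ h => Fin.castLE_injective hTcard h)]
        exact Finset.sum_le_sum_of_subset_of_nonneg (Finset.subset_univ _)
          (fun i _ _ => sq_nonneg _)
    _ = chiSq s {x | t < lam * x} := by
        rw [chiSq, Measure.map_apply measurable_sumsq
          (measurableSet_lt measurable_const (measurable_id'.const_mul lam))]
        rfl
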